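/- Let 0 < ε ≤ 1, m ∈ [ε, 1], and n_2 < m < n_1 with n_1, n_2 ∈ [0,1]. Define the randomized forecast taking value m − ε/2 with probability (m − n_2)/(n_1 − n_2) and m + ε/2 with probability (n_1 − m)/(n_1 − n_2). Then for y = 1, the expected value of (y − p)² minus the corresponding matched term, i.e. Q := [(m−n_2)/(n_1−n_2)]·[(1−(m−ε/2))² − (1−n_1)²] + [(n_1−m)/(n_1−n_2)]·[(1−(m+ε/2))² − (1−n_2)²], satisfies Q < ε(1−m) + ε²/4 ≤ ε. -/

import Mathlib

/-- Case-2 hedging bound in the HOPS sharpness proof, for `y = 1`. -/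
theorem case2_hedging_y1 (ε m n₁ n₂ : ℝ) (hε : 0 < ε) (hε1 : ε ≤ 1)
    (hm : m ∈ Set.Icc ε 1) (hn₁ : n₁ ∈ Set.Icc (0 : ℝ) 1) (hn₂ : n₂ ∈ Set.Icc (0 : ℝ) 1)
    (h₂ : n₂ < m) (h₁ : m < n₁) :
    ((m - n₂) / (n₁ - n₂)) * ((1 - (m - ε / 2)) ^ 2 - (1 - n₁) ^ 2) +
        ((n₁ - m) / (n₁ - n₂)) * ((1 - (m + ε / 2)) ^ 2 - (1 - n₂) ^ 2)
      < ε * (1 - m) + ε ^ 2 / 4 ∧ ε * (1 - m) + ε ^ 2 / 4 ≤ ε := by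
  obtain ⟨hme, hm1⟩ := hm
  obtain ⟨h10, h11⟩ := hn₁
  obtain ⟨h20, h21⟩ := hn₂
  have hd : (0:ℝ) < n₁ - n₂ := by linarith
  constructor
  · rw [div_mul_eq_mul_div, div_mul_eq_mul_div, ← add_div, div_lt_iff₀ hd]
    nlinarith [mul_pos (mul_pos (sub_pos.mpr h₂) (sub_pos.mpr h₁)) hd,
      mul_nonneg (mul_nonneg hε.le (sub_nonneg.mpr h21)) (sub_nonneg.mpr hm1),
      mul_nonneg (mul_nonneg hε.le (sub_pos.mpr h₁).le) (sub_nonneg.mpr hm1)]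
  · nlinarith
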